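/- For all complex numbers x, y, z, every natural number n, and every complex number λ not in {0, -1, ..., -n}, one has Σ_{p=0}^{n} C(n,p) · (1/(p+λ)) · (z + (p+λ)x)^p · (y - (p+λ)x)^{n-p} = Σ_{p=0}^{n} C(n,p) · (1/(p+λ)) · z^p · y^{n-p}. -/

import Mathlib

open scoped BigOperators

private lemma findiff : ∀ d k : ℕ, d < k → ∀ c : ℂ,
    ∑ s ∈ Finset.range (k + 1), (-1 : ℂ) ^ s * (k.choose s : ℂ) * (c + s) ^ d = 0 := by
  intro d
  induction d using Nat.strong_induction_on with
  | _ d ih =>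
    intro k hk c
    obtain ⟨m, rfl⟩ : ∃ m, k = m + 1 := ⟨k - 1, by omega⟩
    have key : ∑ s ∈ Finset.range (m + 2), (-1 : ℂ)^s * ((m+1).choose s : ℂ) * (c + s) ^ d
        = ∑ s ∈ Finset.range (m + 1), (-1:ℂ)^s * (m.choose s : ℂ)
            * ((c + s)^d - (c + (↑(s+1) : ℂ))^d) := by
      have hB : ∑ s ∈ Finset.range (m+1), (-1:ℂ)^s * (m.choose (s+1) : ℂ) * (c + (↑(s+1):ℂ))^d
          = (c + ((0:ℕ):ℂ))^d
            - ∑ t ∈ Finset.range (m+1), (-1:ℂ)^t * (m.choose t : ℂ) * (c + t)^d := by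
        have h2 : ∑ s ∈ Finset.range (m+2), (-1:ℂ)^s * (m.choose s:ℂ) * (c+s)^d
            = ∑ s ∈ Finset.range (m+1), (-1:ℂ)^s * (m.choose s:ℂ) * (c+s)^d := by
          rw [Finset.sum_range_succ]; simp
        have h3 := Finset.sum_range_succ'
          (fun t => (-1:ℂ)^t * (m.choose t : ℂ) * (c + t)^d) (m+1)
        rw [h2] at h3
        have h4 : ∀ s ∈ Finset.range (m+1),
            (-1:ℂ)^(s+1) * (m.choose (s+1) : ℂ) * (c + (↑(s+1):ℂ))^d
            = -((-1:ℂ)^s * (m.choose (s+1) : ℂ) * (c + (↑(s+1):ℂ))^d) := by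
          intro s _; rw [pow_succ]; ring
        rw [Finset.sum_congr rfl h4, Finset.sum_neg_distrib] at h3
        simp only [Nat.cast_zero, pow_zero, Nat.choose_zero_right, Nat.cast_one, one_mul] at h3 ⊢
        linear_combination h3
      rw [Finset.sum_range_succ']
      have h1 : ∀ s ∈ Finset.range (m+1), (-1:ℂ)^(s+1) * ((m+1).choose (s+1) : ℂ) * (c + (↑(s+1):ℂ))^d
          = -((-1:ℂ)^s * (m.choose s : ℂ) * (c + (↑(s+1):ℂ))^d)
            - (-1:ℂ)^s * (m.choose (s+1) : ℂ) * (c + (↑(s+1):ℂ))^d := by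
        intro s _
        rw [Nat.choose_succ_succ]
        push_cast
        rw [pow_succ]
        ring
      rw [Finset.sum_congr rfl h1, Finset.sum_sub_distrib, Finset.sum_neg_distrib, hB]
      simp only [mul_sub]
      rw [Finset.sum_sub_distrib]
      simp only [Nat.cast_zero, pow_zero, Nat.choose_zero_right, Nat.cast_one, one_mul, add_zero]
      ring
    rw [key]
    have hpow : ∀ s ∈ Finset.range (m+1), (-1:ℂ)^s * (m.choose s : ℂ)
        * ((c + s)^d - (c + (↑(s+1) : ℂ))^d)
        = ∑ j ∈ Finset.range d, -((d.choose j : ℂ) * ((-1:ℂ)^s * (m.choose s : ℂ) * (c + s)^j)) := by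
      intro s _
      have hb : (c + (↑(s+1) : ℂ))^d = ∑ j ∈ Finset.range (d+1), (c + s)^j * 1^(d-j) * (d.choose j : ℂ) := by
        have h5 : (c + (↑(s+1) : ℂ)) = (c + s) + 1 := by push_cast; ring
        rw [h5, add_pow]
      rw [hb, Finset.sum_range_succ]
      simp only [one_pow, mul_one, Nat.choose_self, Nat.cast_one]
      have hms : ∑ j ∈ Finset.range d, ((d.choose j : ℂ) * ((-1:ℂ)^s * (m.choose s : ℂ) * (c+s)^j))
          = ((-1:ℂ)^s * (m.choose s : ℂ)) * ∑ j ∈ Finset.range d, (c+s)^j * (d.choose j : ℂ) := by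
        rw [Finset.mul_sum]; exact Finset.sum_congr rfl (fun j _ => by ring)
      rw [Finset.sum_neg_distrib, hms]
      ring
    rw [Finset.sum_congr rfl hpow, Finset.sum_comm]
    apply Finset.sum_eq_zero
    intro j hj
    simp only [Finset.mem_range] at hj
    have hz := ih j hj m (by omega) c
    rw [Finset.sum_neg_distrib]
    have hms2 : ∑ x ∈ Finset.range (m+1), ((d.choose j : ℂ) * ((-1:ℂ)^x * (m.choose x : ℂ) * (c+x)^j))
        = (d.choose j : ℂ) * ∑ x ∈ Finset.range (m+1), (-1:ℂ)^x * (m.choose x : ℂ) * (c+x)^j :=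
      (Finset.mul_sum _ _ _).symm
    rw [hms2, hz, mul_zero, neg_zero]

private lemma deriv_helper (s : Finset ℕ) (c w : ℕ → ℂ) (m : ℕ → ℕ) :
    ∃ P : Polynomial ℂ, (∀ t : ℂ, P.eval t = ∑ p ∈ s, c p * (t + w p) ^ (m p)) ∧
      (∀ t : ℂ, (Polynomial.derivative P).eval t
        = ∑ p ∈ s, c p * (m p : ℂ) * (t + w p) ^ (m p - 1)) := by
  classical
  refine ⟨∑ p ∈ s, Polynomial.C (c p) * (Polynomial.X + Polynomial.C (w p)) ^ (m p),
    fun t => ?_, fun t => ?_⟩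
  · simp [Polynomial.eval_finset_sum]
  · rw [Polynomial.derivative_sum]
    rw [Polynomial.eval_finset_sum]
    refine Finset.sum_congr rfl fun p _ => ?_
    rw [Polynomial.derivative_C_mul, Polynomial.derivative_pow]
    simp
    ring

private lemma const_of_deriv (s s' : Finset ℕ) (c w c' w' : ℕ → ℂ) (m m' : ℕ → ℕ)
    (h : ∀ t : ℂ, ∑ p ∈ s, c p * (m p : ℂ) * (t + w p) ^ (m p - 1)
       = ∑ p ∈ s', c' p * (m' p : ℂ) * (t + w' p) ^ (m' p - 1)) (a : ℂ) :
    (∑ p ∈ s, c p * (a + w p) ^ (m p)) - (∑ p ∈ s', c' p * (a + w' p) ^ (m' p))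
    = (∑ p ∈ s, c p * ((0:ℂ) + w p) ^ (m p)) - ∑ p ∈ s', c' p * ((0:ℂ) + w' p) ^ (m' p) := by
  obtain ⟨P, hP1, hP2⟩ := deriv_helper s c w m
  obtain ⟨Q, hQ1, hQ2⟩ := deriv_helper s' c' w' m'
  have h0 : Polynomial.derivative (P - Q) = 0 := by
    apply Polynomial.funext
    intro t
    rw [map_sub]
    simp [Polynomial.eval_sub, hP2, hQ2, h t]
  have e1 : (P - Q).eval a = (P - Q).eval 0 := by
    rw [Polynomial.eq_C_of_derivative_eq_zero h0]; simp
  simp only [Polynomial.eval_sub, hP1, hQ1] at e1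
  exact e1

theorem stmt5 (n : ℕ) (x y z lam : ℂ) (hlam : ∀ p : ℕ, p ≤ n → lam ≠ -(p : ℂ)) :
    (∑ p ∈ Finset.range (n + 1), (n.choose p : ℂ) * (1 / ((p : ℂ) + lam)) *
      (z + ((p : ℂ) + lam) * x) ^ p * (y - ((p : ℂ) + lam) * x) ^ (n - p)) =
    ∑ p ∈ Finset.range (n + 1), (n.choose p : ℂ) * (1 / ((p : ℂ) + lam)) *
      z ^ p * y ^ (n - p) := by
  induction n generalizing y z lam with
  | zero => simp
  | succ n ih =>
    have hlam' : ∀ p : ℕ, p ≤ n → lam ≠ -(p : ℂ) := fun p hp => hlam p (by omega)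
    have hlam1 : ∀ p : ℕ, p ≤ n → lam + 1 ≠ -(p : ℂ) := by
      intro p hp hcon
      exact hlam (p+1) (by omega) (by push_cast; linear_combination hcon)
    -- step A : constancy in y
    have stepA : ∀ Y : ℂ,
        (∑ p ∈ Finset.range (n + 2), ((n+1).choose p : ℂ) * (1 / ((p : ℂ) + lam)) *
          (z + ((p : ℂ) + lam) * x) ^ p * (Y - ((p : ℂ) + lam) * x) ^ (n + 1 - p)) -
        (∑ p ∈ Finset.range (n + 2), ((n+1).choose p : ℂ) * (1 / ((p : ℂ) + lam)) *
          z ^ p * Y ^ (n + 1 - p)) =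
        (∑ p ∈ Finset.range (n + 2), ((n+1).choose p : ℂ) * (1 / ((p : ℂ) + lam)) *
          (z + ((p : ℂ) + lam) * x) ^ p * ((0:ℂ) - ((p : ℂ) + lam) * x) ^ (n + 1 - p)) -
        (∑ p ∈ Finset.range (n + 2), ((n+1).choose p : ℂ) * (1 / ((p : ℂ) + lam)) *
          z ^ p * (0:ℂ) ^ (n + 1 - p)) := by
      intro Y
      have hderiv : ∀ t : ℂ,
          ∑ p ∈ Finset.range (n + 2),
            (((n+1).choose p : ℂ) * (1 / ((p : ℂ) + lam)) * (z + ((p : ℂ) + lam) * x) ^ p)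
              * ((n + 1 - p : ℕ) : ℂ) * (t + -(((p : ℂ) + lam) * x)) ^ (n + 1 - p - 1)
          = ∑ p ∈ Finset.range (n + 2),
            (((n+1).choose p : ℂ) * (1 / ((p : ℂ) + lam)) * z ^ p)
              * ((n + 1 - p : ℕ) : ℂ) * (t + (0:ℂ)) ^ (n + 1 - p - 1) := by
        intro t
        conv_lhs => rw [Finset.sum_range_succ]
        conv_rhs => rw [Finset.sum_range_succ]
        simp only [Nat.sub_self, Nat.cast_zero, mul_zero, zero_mul, add_zero]
        have hc1 : ∀ p ∈ Finset.range (n+1),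
            (((n+1).choose p : ℂ) * (1 / ((p : ℂ) + lam)) * (z + ((p : ℂ) + lam) * x) ^ p)
              * ((n + 1 - p : ℕ) : ℂ) * (t + -(((p : ℂ) + lam) * x)) ^ (n + 1 - p - 1)
            = ((n:ℂ)+1) * ((n.choose p : ℂ) * (1 / ((p : ℂ) + lam)) *
                (z + ((p : ℂ) + lam) * x) ^ p * (t - ((p : ℂ) + lam) * x) ^ (n - p)) := by
          intro p hp
          rw [Finset.mem_range] at hp
          have hch : ((n + 1 - p : ℕ) : ℂ) * (((n+1).choose p : ℕ) : ℂ)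
              = ((n:ℂ)+1) * ((n.choose p : ℕ) : ℂ) := by
            have h0 := Nat.choose_mul_succ_eq n p
            have hcast : ((n.choose p : ℕ) : ℂ) * ((n:ℂ)+1)
                = (((n+1).choose p : ℕ) : ℂ) * ((n+1-p : ℕ) : ℂ) := by exact_mod_cast h0
            linear_combination -hcast
          rw [show n + 1 - p - 1 = n - p from by omega]
          rw [show t + -(((p : ℂ) + lam) * x) = t - ((p : ℂ) + lam) * x from by ring]
          linear_combination ((1 / ((p:ℂ)+lam)) * (z+((p:ℂ)+lam)*x)^p *
            (t-((p:ℂ)+lam)*x)^(n-p)) * hch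
        have hc2 : ∀ p ∈ Finset.range (n+1),
            (((n+1).choose p : ℂ) * (1 / ((p : ℂ) + lam)) * z ^ p)
              * ((n + 1 - p : ℕ) : ℂ) * t ^ (n + 1 - p - 1)
            = ((n:ℂ)+1) * ((n.choose p : ℂ) * (1 / ((p : ℂ) + lam)) * z ^ p * t ^ (n - p)) := by
          intro p hp
          rw [Finset.mem_range] at hp
          have hch : ((n + 1 - p : ℕ) : ℂ) * (((n+1).choose p : ℕ) : ℂ)
              = ((n:ℂ)+1) * ((n.choose p : ℕ) : ℂ) := by
            have h0 := Nat.choose_mul_succ_eq n p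
            have hcast : ((n.choose p : ℕ) : ℂ) * ((n:ℂ)+1)
                = (((n+1).choose p : ℕ) : ℂ) * ((n+1-p : ℕ) : ℂ) := by exact_mod_cast h0
            linear_combination -hcast
          rw [show n + 1 - p - 1 = n - p from by omega]
          linear_combination ((1 / ((p:ℂ)+lam)) * z^p * t^(n-p)) * hch
        rw [Finset.sum_congr rfl hc1, Finset.sum_congr rfl hc2, ← Finset.mul_sum, ← Finset.mul_sum,
          ih t z lam hlam']
      have hc := const_of_deriv (Finset.range (n+2)) (Finset.range (n+2))
        (fun p => ((n+1).choose p : ℂ) * (1 / ((p : ℂ) + lam)) * (z + ((p : ℂ) + lam) * x) ^ p)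
        (fun p => -(((p : ℂ) + lam) * x))
        (fun p => ((n+1).choose p : ℂ) * (1 / ((p : ℂ) + lam)) * z ^ p)
        (fun p => (0:ℂ))
        (fun p => n + 1 - p) (fun p => n + 1 - p) hderiv Y
      have r1 : ∀ W : ℂ,
          (∑ p ∈ Finset.range (n + 2), ((n+1).choose p : ℂ) * (1 / ((p : ℂ) + lam)) *
            (z + ((p : ℂ) + lam) * x) ^ p * (W - ((p : ℂ) + lam) * x) ^ (n + 1 - p))
          = ∑ p ∈ Finset.range (n + 2),
              (((n+1).choose p : ℂ) * (1 / ((p : ℂ) + lam)) * (z + ((p : ℂ) + lam) * x) ^ p)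
                * (W + -(((p : ℂ) + lam) * x)) ^ (n + 1 - p) :=
        fun W => Finset.sum_congr rfl fun p _ => by ring
      have r2 : ∀ W : ℂ,
          (∑ p ∈ Finset.range (n + 2), ((n+1).choose p : ℂ) * (1 / ((p : ℂ) + lam)) *
            z ^ p * W ^ (n + 1 - p))
          = ∑ p ∈ Finset.range (n + 2),
              (((n+1).choose p : ℂ) * (1 / ((p : ℂ) + lam)) * z ^ p) * (W + 0) ^ (n + 1 - p) :=
        fun W => Finset.sum_congr rfl fun p _ => by ring
      rw [r1 Y, r2 Y, r1 0, r2 0]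
      exact hc
    -- step B : constancy in z at y = 0
    have stepB : ∀ Z : ℂ,
        (∑ p ∈ Finset.range (n + 2), ((n+1).choose p : ℂ) * (1 / ((p : ℂ) + lam)) *
          (Z + ((p : ℂ) + lam) * x) ^ p * ((0:ℂ) - ((p : ℂ) + lam) * x) ^ (n + 1 - p)) -
        (∑ p ∈ Finset.range (n + 2), ((n+1).choose p : ℂ) * (1 / ((p : ℂ) + lam)) *
          Z ^ p * (0:ℂ) ^ (n + 1 - p)) =
        (∑ p ∈ Finset.range (n + 2), ((n+1).choose p : ℂ) * (1 / ((p : ℂ) + lam)) *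
          ((0:ℂ) + ((p : ℂ) + lam) * x) ^ p * ((0:ℂ) - ((p : ℂ) + lam) * x) ^ (n + 1 - p)) -
        (∑ p ∈ Finset.range (n + 2), ((n+1).choose p : ℂ) * (1 / ((p : ℂ) + lam)) *
          (0:ℂ) ^ p * (0:ℂ) ^ (n + 1 - p)) := by
      intro Z
      have hderiv : ∀ t : ℂ,
          ∑ p ∈ Finset.range (n + 2),
            (((n+1).choose p : ℂ) * (1 / ((p : ℂ) + lam)) * ((0:ℂ) - ((p : ℂ) + lam) * x) ^ (n + 1 - p))
              * ((p : ℕ) : ℂ) * (t + ((p : ℂ) + lam) * x) ^ (p - 1)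
          = ∑ p ∈ Finset.range (n + 2),
            (((n+1).choose p : ℂ) * (1 / ((p : ℂ) + lam)) * (0:ℂ) ^ (n + 1 - p))
              * ((p : ℕ) : ℂ) * (t + (0:ℂ)) ^ (p - 1) := by
        intro t
        simp only [add_zero]
        have hL := Finset.sum_range_succ'
          (fun p => (((n+1).choose p : ℂ) * (1 / ((p : ℂ) + lam)) *
            ((0:ℂ) - ((p : ℂ) + lam) * x) ^ (n + 1 - p)) * ((p : ℕ) : ℂ)
              * (t + ((p : ℂ) + lam) * x) ^ (p - 1)) (n+1)
        have hR := Finset.sum_range_succ'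
          (fun p => (((n+1).choose p : ℂ) * (1 / ((p : ℂ) + lam)) * (0:ℂ) ^ (n + 1 - p))
              * ((p : ℕ) : ℂ) * t ^ (p - 1)) (n+1)
        simp only [Nat.cast_zero, mul_zero, zero_mul, add_zero] at hL hR
        rw [hL, hR]
        have hc1 : ∀ q ∈ Finset.range (n+1),
            (((n+1).choose (q+1) : ℂ) * (1 / (((q+1 : ℕ) : ℂ) + lam)) *
              ((0:ℂ) - (((q+1 : ℕ) : ℂ) + lam) * x) ^ (n + 1 - (q+1)))
                * (((q+1) : ℕ) : ℂ) * (t + (((q+1 : ℕ) : ℂ) + lam) * x) ^ ((q+1) - 1)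
            = ((n:ℂ)+1) * ((n.choose q : ℂ) * (1 / ((q : ℂ) + (lam+1))) *
                (t + ((q : ℂ) + (lam+1)) * x) ^ q * ((0:ℂ) - ((q : ℂ) + (lam+1)) * x) ^ (n - q)) := by
          intro q hq
          have h0 := Nat.add_one_mul_choose_eq n q
          have hcast : ((n+1 : ℕ) : ℂ) * ((n.choose q : ℕ) : ℂ)
              = (((n+1).choose (q+1) : ℕ) : ℂ) * ((q+1 : ℕ) : ℂ) := by exact_mod_cast h0
          push_cast at hcast ⊢
          linear_combination (-(1 / ((q:ℂ)+1+lam)) * (t + ((q:ℂ)+1+lam)*x)^q *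
            ((0:ℂ) - ((q:ℂ)+1+lam)*x)^(n-q)) * hcast
        have hc2 : ∀ q ∈ Finset.range (n+1),
            (((n+1).choose (q+1) : ℂ) * (1 / (((q+1 : ℕ) : ℂ) + lam)) * (0:ℂ) ^ (n + 1 - (q+1)))
                * (((q+1) : ℕ) : ℂ) * t ^ ((q+1) - 1)
            = ((n:ℂ)+1) * ((n.choose q : ℂ) * (1 / ((q : ℂ) + (lam+1))) *
                t ^ q * (0:ℂ) ^ (n - q)) := by
          intro q hq
          have h0 := Nat.add_one_mul_choose_eq n q
          have hcast : ((n+1 : ℕ) : ℂ) * ((n.choose q : ℕ) : ℂ)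
              = (((n+1).choose (q+1) : ℕ) : ℂ) * ((q+1 : ℕ) : ℂ) := by exact_mod_cast h0
          push_cast at hcast ⊢
          linear_combination (-(1 / ((q:ℂ)+1+lam)) * t^q * (0:ℂ)^(n-q)) * hcast
        rw [Finset.sum_congr rfl hc1, Finset.sum_congr rfl hc2, ← Finset.mul_sum, ← Finset.mul_sum,
          ih 0 t (lam+1) hlam1]
      have hc := const_of_deriv (Finset.range (n+2)) (Finset.range (n+2))
        (fun p => ((n+1).choose p : ℂ) * (1 / ((p : ℂ) + lam)) * ((0:ℂ) - ((p : ℂ) + lam) * x) ^ (n + 1 - p))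
        (fun p => ((p : ℂ) + lam) * x)
        (fun p => ((n+1).choose p : ℂ) * (1 / ((p : ℂ) + lam)) * (0:ℂ) ^ (n + 1 - p))
        (fun p => (0:ℂ))
        (fun p => p) (fun p => p) hderiv Z
      have r1 : ∀ W : ℂ,
          (∑ p ∈ Finset.range (n + 2), ((n+1).choose p : ℂ) * (1 / ((p : ℂ) + lam)) *
            (W + ((p : ℂ) + lam) * x) ^ p * ((0:ℂ) - ((p : ℂ) + lam) * x) ^ (n + 1 - p))
          = ∑ p ∈ Finset.range (n + 2),
              (((n+1).choose p : ℂ) * (1 / ((p : ℂ) + lam)) * ((0:ℂ) - ((p : ℂ) + lam) * x) ^ (n + 1 - p))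
                * (W + ((p : ℂ) + lam) * x) ^ p :=
        fun W => Finset.sum_congr rfl fun p _ => by ring
      have r2 : ∀ W : ℂ,
          (∑ p ∈ Finset.range (n + 2), ((n+1).choose p : ℂ) * (1 / ((p : ℂ) + lam)) *
            W ^ p * (0:ℂ) ^ (n + 1 - p))
          = ∑ p ∈ Finset.range (n + 2),
              (((n+1).choose p : ℂ) * (1 / ((p : ℂ) + lam)) * (0:ℂ) ^ (n + 1 - p)) * (W + 0) ^ p :=
        fun W => Finset.sum_congr rfl fun p _ => by ring
      rw [r1 Z, r2 Z, r1 0, r2 0]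
      exact hc
    -- step C : value at (0,0) is zero
    have stepC :
        (∑ p ∈ Finset.range (n + 2), ((n+1).choose p : ℂ) * (1 / ((p : ℂ) + lam)) *
          ((0:ℂ) + ((p : ℂ) + lam) * x) ^ p * ((0:ℂ) - ((p : ℂ) + lam) * x) ^ (n + 1 - p)) -
        (∑ p ∈ Finset.range (n + 2), ((n+1).choose p : ℂ) * (1 / ((p : ℂ) + lam)) *
          (0:ℂ) ^ p * (0:ℂ) ^ (n + 1 - p)) = 0 := by
      have hT : (∑ p ∈ Finset.range (n + 2), ((n+1).choose p : ℂ) * (1 / ((p : ℂ) + lam)) *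
          (0:ℂ) ^ p * (0:ℂ) ^ (n + 1 - p)) = 0 := by
        apply Finset.sum_eq_zero
        intro p hp
        rcases Nat.eq_zero_or_pos p with h0 | h0
        · subst h0; rw [zero_pow (by omega : n + 1 - 0 ≠ 0)]; ring
        · rw [zero_pow (by omega : p ≠ 0)]; ring
      have hF : ∀ p ∈ Finset.range (n + 2),
          ((n+1).choose p : ℂ) * (1 / ((p : ℂ) + lam)) *
            ((0:ℂ) + ((p : ℂ) + lam) * x) ^ p * ((0:ℂ) - ((p : ℂ) + lam) * x) ^ (n + 1 - p)
          = ((-1:ℂ)^(n+1) * x^(n+1)) * ((-1:ℂ)^p * ((n+1).choose p : ℂ) * (lam + p) ^ n) := by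
        intro p hp
        rw [Finset.mem_range] at hp
        have hple : p ≤ n + 1 := by omega
        have hu : ((p:ℂ) + lam) ≠ 0 := by
          intro h0; exact hlam p hple (by linear_combination h0)
        have e1 : ((0:ℂ) - ((p : ℂ) + lam) * x) ^ (n + 1 - p)
            = (-1:ℂ)^(n+1-p) * ((p:ℂ)+lam)^(n+1-p) * x^(n+1-p) := by
          rw [zero_sub, neg_pow, mul_pow]; ring
        have e2 : ((0:ℂ) + ((p : ℂ) + lam) * x) ^ p = ((p:ℂ)+lam)^p * x^p := by
          rw [zero_add, mul_pow]
        have e5 : (-1:ℂ)^(n+1-p) = (-1:ℂ)^(n+1) * (-1:ℂ)^p := by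
          have h6 : ((-1:ℂ))^((n+1-p) + 2*p) = (-1:ℂ)^((n+1)+p) := by
            rw [show (n+1-p) + 2*p = (n+1) + p from by omega]
          rw [pow_add, pow_add, pow_mul] at h6
          norm_num at h6
          exact h6
        have e6 : ((p:ℂ)+lam)^p * ((p:ℂ)+lam)^(n+1-p) = ((p:ℂ)+lam) * ((p:ℂ)+lam)^n := by
          rw [← pow_add, show p + (n+1-p) = n+1 from by omega, pow_succ]; ring
        have e7 : x^p * x^(n+1-p) = x^(n+1) := by
          rw [← pow_add, show p + (n+1-p) = n+1 from by omega]
        rw [e1, e2, e5]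
        have e8 : (lam + (p:ℂ)) = ((p:ℂ) + lam) := by ring
        rw [e8]
        have hinv : (1 / ((p:ℂ)+lam)) * ((p:ℂ)+lam) = 1 := by field_simp
        linear_combination (((n+1).choose p : ℂ) * (-1:ℂ)^(n+1) * (-1:ℂ)^p * (1 / ((p:ℂ)+lam)) * x^p * x^(n+1-p)) * e6 +
          (((n+1).choose p : ℂ) * (-1:ℂ)^(n+1) * (-1:ℂ)^p * x^p * x^(n+1-p) * ((p:ℂ)+lam)^n) * hinv +
          (((n+1).choose p : ℂ) * (-1:ℂ)^(n+1) * (-1:ℂ)^p * ((p:ℂ)+lam)^n) * e7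
      rw [hT, Finset.sum_congr rfl hF, ← Finset.mul_sum]
      rw [findiff n (n+1) (by omega) lam]
      ring
    have hfin := (stepA y).trans ((stepB z).trans stepC)
    linear_combination hfin
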